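/- For the Liouville 2-form θ²_M = (1/2) p_{μν} dx^μ ∧ dx^ν on ∧²T*M one has: i_T^2 θ²_M = (1/2) p_{μν} ẋ^{μν}, i_T^2 dθ²_M = (1/2) ẋ^{μν} dp_{μν} − y^σ_{σν} dx^ν, and d_T^2 θ²_M = (1/2) p_{μν} dẋ^{μν} + y^σ_{σν} dx^ν, as forms/functions on ∧²T(∧²T*M). -/

import Mathlib

noncomputable section

/-- Coordinate model of vectors: functions on an index set. -/
abbrev Vec (ι : Type) := ι → ℝ

/-- Coordinate model of bivectors on `Vec ι`: (antisymmetric) matrices. -/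
abbrev Biv (ι : Type) := ι → ι → ℝ

/-- Antisymmetry of a bivector matrix. -/
def IsAnti {ι : Type} (u : Biv ι) : Prop := ∀ a b, u a b = - u b a

/-- Raw coordinate model of the exterior derivative of a `k`-form
(given as a function of a point and `k` tangent vectors). -/
def Dext {A : Type} [NormedAddCommGroup A] [NormedSpace ℝ A] {k : ℕ}
    (φ : A → (Fin k → A) → ℝ) : A → (Fin (k+1) → A) → ℝ :=
  fun x w => ∑ i : Fin (k+1), (-1 : ℝ)^(i : ℕ) *
    fderiv ℝ (fun y => φ y (fun j => w (i.succAbove j))) x (w i)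

/-- Pull-back of a raw `k`-form along a map. -/
def pullF {A B : Type} [NormedAddCommGroup A] [NormedSpace ℝ A]
    [NormedAddCommGroup B] [NormedSpace ℝ B] {k : ℕ}
    (f : A → B) (φ : B → (Fin k → B) → ℝ) : A → (Fin k → A) → ℝ :=
  fun x w => φ (f x) (fun i => fderiv ℝ f x (w i))

/-- The operator `i_T^2`: insertion of the bivector into the first two slots of a
`(k+2)`-form on the base, producing a semi-basic `k`-form on `∧²TN`
(modelled on `Vec ι × Biv ι`; only the base components of the arguments are used,
reflecting semi-basicity). -/
def iT2 {ι : Type} [Fintype ι] [DecidableEq ι] {k : ℕ}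
    (φ : Vec ι → (Fin (k+2) → Vec ι) → ℝ) :
    (Vec ι × Biv ι) → (Fin k → Vec ι × Biv ι) → ℝ :=
  fun p w => (1/2 : ℝ) * ∑ a, ∑ b, p.2 a b *
    φ p.1 (Matrix.vecCons (Pi.single a 1)
      (Matrix.vecCons (Pi.single b 1) (fun i => (w i).1)))

/-- The operator `d_T^2 = d ∘ i_T^2 − i_T^2 ∘ d` on `(k+2)`-forms, `k ≥ 0`. -/
def dT2 {ι : Type} [Fintype ι] [DecidableEq ι] {k : ℕ}
    (φ : Vec ι → (Fin (k+2) → Vec ι) → ℝ) :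
    (Vec ι × Biv ι) → (Fin (k+1) → Vec ι × Biv ι) → ℝ :=
  fun p w => Dext (iT2 φ) p w - iT2 (Dext φ) p w

/-- `i_T^2` on 1-forms lands in `(−1)`-forms, i.e. is zero. -/
def iT2one {ι : Type} (_φ : Vec ι → (Fin 1 → Vec ι) → ℝ) :
    (Vec ι × Biv ι) → ℝ := fun _ => 0

/-- `d_T^2` on 1-forms: `d ∘ i_T^2 − i_T^2 ∘ d = − i_T^2 ∘ d`. -/
def dT2one {ι : Type} [Fintype ι] [DecidableEq ι]
    (φ : Vec ι → (Fin 1 → Vec ι) → ℝ) : (Vec ι × Biv ι) → ℝ :=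
  fun p => - iT2 (Dext φ) p (fun i => i.elim0)

end

noncomputable section

/-!
STATEMENT 13: For the Liouville 2-form `θ²_M = (1/2) p_{μν} dx^μ ∧ dx^ν` on `∧²T*M`:
`i_T^2 θ²_M = (1/2) p_{μν} ẋ^{μν}`,
`i_T^2 dθ²_M = (1/2) ẋ^{μν} dp_{μν} − y^σ_{σν} dx^ν`, and
`d_T^2 θ²_M = (1/2) p_{μν} dẋ^{μν} + y^σ_{σν} dx^ν`,
as functions/forms on `∧²T(∧²T*M)`.

Coordinate model as before: points of `∧²T(∧²T*M)` are `(b, U)`; a tangent vector `v` to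
`∧²T(∧²T*M)` has components `v.1` (in the `x^μ, p_{μν}` directions) and `v.2` (in the
bivector coordinates `ẋ^{μν}, y^μ_{νλ}, ṗ`, so that `dẋ^{μν}(v) = v.2 (inl μ) (inl ν)`).
-/

lemma fderiv_lin {κ : Type} [Fintype κ] [DecidableEq κ] {J : Type} [Fintype J]
    (c : J → ℝ) (g : J → κ) (x u : Vec κ) :
    fderiv ℝ (fun y : Vec κ => ∑ j, y (g j) * c j) x u = ∑ j, u (g j) * c j := by
  have h : (fun y : Vec κ => ∑ j, y (g j) * c j)
      = (∑ j : J, c j • (ContinuousLinearMap.proj (g j) : Vec κ →L[ℝ] ℝ)) := by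
    ext y
    simp [ContinuousLinearMap.sum_apply, mul_comm]
  rw [h, ContinuousLinearMap.fderiv]
  simp [ContinuousLinearMap.sum_apply, mul_comm]

def CX {κ : Type} [Fintype κ] [DecidableEq κ] (j : κ) : Vec κ × Biv κ →L[ℝ] ℝ :=
  (ContinuousLinearMap.proj j).comp (ContinuousLinearMap.fst ℝ (Vec κ) (Biv κ))

def CP {κ : Type} [Fintype κ] [DecidableEq κ] (a c : κ) : Vec κ × Biv κ →L[ℝ] ℝ :=
  (ContinuousLinearMap.proj c).comp (((ContinuousLinearMap.proj a : Biv κ →L[ℝ] Vec κ)).comp (ContinuousLinearMap.snd ℝ (Vec κ) (Biv κ)))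

@[simp] lemma CX_apply {κ : Type} [Fintype κ] [DecidableEq κ] (j : κ) (p : Vec κ × Biv κ) :
    CX j p = p.1 j := rfl
@[simp] lemma CP_apply {κ : Type} [Fintype κ] [DecidableEq κ] (a c : κ) (p : Vec κ × Biv κ) :
    CP a c p = p.2 a c := rfl

lemma hasfd_quad {κ : Type} [Fintype κ] [DecidableEq κ] (a c j : κ) (x : Vec κ × Biv κ) :
    HasFDerivAt (fun p : Vec κ × Biv κ => p.2 a c * p.1 j)
      (x.2 a c • CX j + x.1 j • CP a c) x := by
  have h1 : HasFDerivAt (fun p : Vec κ × Biv κ => p.2 a c) (CP a c) x := (CP a c).hasFDerivAt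
  have h2 : HasFDerivAt (fun p : Vec κ × Biv κ => p.1 j) (CX j) x := (CX j).hasFDerivAt
  exact h1.mul h2

lemma fderiv_quad_sum {κ : Type} [Fintype κ] [DecidableEq κ] {J : Type} [Fintype J]
    (C : J → ℝ) (A B G : J → κ) (x v : Vec κ × Biv κ) :
    fderiv ℝ (fun p : Vec κ × Biv κ => ∑ j, C j * (p.2 (A j) (B j) * p.1 (G j))) x v
      = ∑ j, C j * (v.2 (A j) (B j) * x.1 (G j) + x.2 (A j) (B j) * v.1 (G j)) := by
  have h : HasFDerivAt (fun p : Vec κ × Biv κ => ∑ j, C j * (p.2 (A j) (B j) * p.1 (G j)))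
      (∑ j : J, C j • (x.2 (A j) (B j) • CX (G j) + x.1 (G j) • CP (A j) (B j))) x := by
    exact HasFDerivAt.fun_sum (fun j _ => (hasfd_quad (A j) (B j) (G j) x).const_mul (C j))
  rw [h.fderiv]
  simp only [ContinuousLinearMap.sum_apply, ContinuousLinearMap.smul_apply,
    ContinuousLinearMap.add_apply, CX_apply, CP_apply, smul_eq_mul]
  exact Finset.sum_congr rfl fun j _ => by ring


lemma fderiv_theta {ι : Type} [Fintype ι] [DecidableEq ι] (K : ι → ι → ℝ)
    (x u : Vec (ι ⊕ ι × ι)) :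
    fderiv ℝ (fun y : Vec (ι ⊕ ι × ι) => (1/2 : ℝ) * ∑ μ, ∑ ν, y (Sum.inr (μ, ν)) * K μ ν) x u
      = (1/2 : ℝ) * ∑ μ, ∑ ν, u (Sum.inr (μ, ν)) * K μ ν := by
  have hfun : ∀ y : Vec (ι ⊕ ι × ι),
      ((1/2 : ℝ) * ∑ μ, ∑ ν, y (Sum.inr (μ, ν)) * K μ ν)
      = ∑ j : ι × ι, y (Sum.inr j) * (1/2 * K j.1 j.2) := by
    intro y
    rw [Fintype.sum_prod_type, Finset.mul_sum]
    refine Finset.sum_congr rfl fun μ _ => ?_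
    rw [Finset.mul_sum]
    exact Finset.sum_congr rfl fun ν _ => by ring
  simp only [hfun]
  rw [fderiv_lin (fun j : ι × ι => 1/2 * K j.1 j.2) (fun j => Sum.inr j) x u]
/-- Explicit formula for `Dext` of the Liouville-type 2-form. -/
lemma Dext_theta {ι : Type} [Fintype ι] [DecidableEq ι]
    (θ : Vec (ι ⊕ ι × ι) → (Fin 2 → Vec (ι ⊕ ι × ι)) → ℝ)
    (hθ : θ = fun b w => (1/2 : ℝ) * ∑ μ, ∑ ν, b (Sum.inr (μ, ν)) *
      (w 0 (Sum.inl μ) * w 1 (Sum.inl ν) - w 1 (Sum.inl μ) * w 0 (Sum.inl ν)))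
    (x : Vec (ι ⊕ ι × ι)) (w : Fin 3 → Vec (ι ⊕ ι × ι)) :
    Dext θ x w = θ (w 0) ![w 1, w 2] - θ (w 1) ![w 0, w 2] + θ (w 2) ![w 0, w 1] := by
  have e0 : (fun j : Fin 2 => w (Fin.succAbove 0 j)) = ![w 1, w 2] := by
    ext j i; fin_cases j <;> rfl
  have e1 : (fun j : Fin 2 => w (Fin.succAbove 1 j)) = ![w 0, w 2] := by
    ext j i; fin_cases j <;> rfl
  have e2 : (fun j : Fin 2 => w (Fin.succAbove 2 j)) = ![w 0, w 1] := by
    ext j i; fin_cases j <;> rfl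
  rw [Dext, Fin.sum_univ_three, e0, e1, e2]
  subst hθ
  simp only []
  rw [fderiv_theta, fderiv_theta, fderiv_theta]
  norm_num
  ring


lemma flatten4 {κ ι : Type} [Fintype κ] [Fintype ι]
    (Q : κ → κ → ℝ) (R : ι × ι → ℝ) (C : κ → κ → ι → ι → ℝ) :
    (1/2 : ℝ) * ∑ a, ∑ c, Q a c * ((1/2 : ℝ) * ∑ μ, ∑ ν, R (μ, ν) * C a c μ ν)
      = ∑ j : (κ × κ) × ι × ι, (1/4 * C j.1.1 j.1.2 j.2.1 j.2.2) * (Q j.1.1 j.1.2 * R j.2) := by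
  simp only [Finset.mul_sum]
  conv_rhs => rw [Fintype.sum_prod_type, Fintype.sum_prod_type]
  refine Finset.sum_congr rfl fun a _ => ?_
  refine Finset.sum_congr rfl fun c _ => ?_
  rw [Fintype.sum_prod_type]
  refine Finset.sum_congr rfl fun μ _ => ?_
  refine Finset.sum_congr rfl fun ν _ => ?_
  ring

lemma fderiv_quad_sum4 {κ ι : Type} [Fintype κ] [DecidableEq κ] [Fintype ι]
    (hκ : κ = (ι ⊕ ι × ι)) (C : κ → κ → ι → ι → ℝ) (G : ι × ι → κ) (x v : Vec κ × Biv κ) :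
    fderiv ℝ (fun p : Vec κ × Biv κ =>
        (1/2 : ℝ) * ∑ a, ∑ c, p.2 a c * ((1/2 : ℝ) * ∑ μ, ∑ ν, p.1 (G (μ, ν)) * C a c μ ν)) x v
      = (1/2 : ℝ) * ∑ a, ∑ c, (v.2 a c * ((1/2 : ℝ) * ∑ μ, ∑ ν, x.1 (G (μ, ν)) * C a c μ ν)
          + x.2 a c * ((1/2 : ℝ) * ∑ μ, ∑ ν, v.1 (G (μ, ν)) * C a c μ ν)) := by
  have hfun : (fun p : Vec κ × Biv κ =>
      (1/2 : ℝ) * ∑ a, ∑ c, p.2 a c * ((1/2 : ℝ) * ∑ μ, ∑ ν, p.1 (G (μ, ν)) * C a c μ ν))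
      = fun p => ∑ j : (κ × κ) × ι × ι, (1/4 * C j.1.1 j.1.2 j.2.1 j.2.2)
          * (p.2 j.1.1 j.1.2 * p.1 (G j.2)) := by
    ext p
    exact flatten4 (fun a c => p.2 a c) (fun j => p.1 (G j)) C
  rw [hfun, fderiv_quad_sum (fun j : (κ × κ) × ι × ι => 1/4 * C j.1.1 j.1.2 j.2.1 j.2.2)
    (fun j => j.1.1) (fun j => j.1.2) (fun j => G j.2) x v]
  have expand : ∀ j : (κ × κ) × ι × ι, (1/4 * C j.1.1 j.1.2 j.2.1 j.2.2)
      * (v.2 j.1.1 j.1.2 * x.1 (G j.2) + x.2 j.1.1 j.1.2 * v.1 (G j.2))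
      = (1/4 * C j.1.1 j.1.2 j.2.1 j.2.2) * (v.2 j.1.1 j.1.2 * x.1 (G j.2))
        + (1/4 * C j.1.1 j.1.2 j.2.1 j.2.2) * (x.2 j.1.1 j.1.2 * v.1 (G j.2)) :=
    fun j => by ring
  simp only [expand, Finset.sum_add_distrib]
  rw [← flatten4 (fun a c => v.2 a c) (fun j => x.1 (G j)) C,
    ← flatten4 (fun a c => x.2 a c) (fun j => v.1 (G j)) C]
  ring

lemma sum_ite_push {J : Type} [Fintype J] (P Q : Prop) [Decidable P] [Decidable Q]
    [DecidableEq J] (c : J) (f : J → ℝ) :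
    (∑ x : J, if P then if Q then (if x = c then f x else 0) else 0 else 0)
      = if P then if Q then f c else 0 else 0 := by
  split_ifs <;> simp

theorem liouville_two_form_lifts {ι : Type} [Fintype ι] [DecidableEq ι]
    (θ : Vec (ι ⊕ ι × ι) → (Fin 2 → Vec (ι ⊕ ι × ι)) → ℝ)
    (hθ : θ = fun b w => (1/2 : ℝ) * ∑ μ, ∑ ν, b (Sum.inr (μ, ν)) *
      (w 0 (Sum.inl μ) * w 1 (Sum.inl ν) - w 1 (Sum.inl μ) * w 0 (Sum.inl ν)))
    (b : Vec (ι ⊕ ι × ι)) (hb : ∀ μ ν, b (Sum.inr (μ, ν)) = - b (Sum.inr (ν, μ)))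
    (U : Biv (ι ⊕ ι × ι)) (hU : IsAnti U)
    (hUp : ∀ i μ ν, U i (Sum.inr (μ, ν)) = - U i (Sum.inr (ν, μ)))
    (v : Vec (ι ⊕ ι × ι) × Biv (ι ⊕ ι × ι))
    (hv1 : ∀ μ ν, v.1 (Sum.inr (μ, ν)) = - v.1 (Sum.inr (ν, μ)))
    (hv2 : IsAnti v.2)
    (hv2p : ∀ i μ ν, v.2 i (Sum.inr (μ, ν)) = - v.2 i (Sum.inr (ν, μ))) :
    -- `i_T^2 θ²_M = (1/2) p_{μν} ẋ^{μν}`: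
    iT2 θ (b, U) (fun i => i.elim0) =
      (1/2 : ℝ) * ∑ μ, ∑ ν, b (Sum.inr (μ, ν)) * U (Sum.inl μ) (Sum.inl ν) ∧
    -- `i_T^2 dθ²_M = (1/2) ẋ^{μν} dp_{μν} − y^σ_{σν} dx^ν`:
    iT2 (Dext θ) (b, U) (Matrix.vecCons v (fun i => i.elim0)) =
      (1/2 : ℝ) * (∑ μ, ∑ ν, U (Sum.inl μ) (Sum.inl ν) * v.1 (Sum.inr (μ, ν)))
        - ∑ ν, (∑ σ, U (Sum.inl σ) (Sum.inr (σ, ν))) * v.1 (Sum.inl ν) ∧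
    -- `d_T^2 θ²_M = (1/2) p_{μν} dẋ^{μν} + y^σ_{σν} dx^ν`:
    dT2 θ (b, U) (Matrix.vecCons v (fun i => i.elim0)) =
      (1/2 : ℝ) * (∑ μ, ∑ ν, b (Sum.inr (μ, ν)) * v.2 (Sum.inl μ) (Sum.inl ν))
        + ∑ ν, (∑ σ, U (Sum.inl σ) (Sum.inr (σ, ν))) * v.1 (Sum.inl ν) := by
  have H1 : iT2 θ (b, U) (fun i => i.elim0) =
      (1/2 : ℝ) * ∑ μ, ∑ ν, b (Sum.inr (μ, ν)) * U (Sum.inl μ) (Sum.inl ν) := by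
    subst hθ
    simp only [iT2, Matrix.cons_val_zero, Matrix.cons_val_one, Matrix.head_cons,
      Fintype.sum_sum_type, Pi.single_apply, mul_ite, ite_mul, mul_one, mul_zero, zero_mul,
      one_mul, Sum.inl.injEq, reduceCtorEq, if_false, sub_zero, zero_sub,
      Finset.sum_ite_eq, Finset.sum_ite_eq', Finset.mem_univ, if_true,
      Finset.sum_const_zero, mul_neg, add_zero, zero_add, sub_self, Finset.sum_neg_distrib]
    simp only [mul_sub, mul_ite, mul_one, mul_zero, Finset.sum_sub_distrib,
      Finset.sum_ite_eq', Finset.sum_ite_eq, Finset.mem_univ, if_true, neg_zero, add_zero]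
    have e : (∑ x : ι, ∑ x1 : ι, U (Sum.inl x) (Sum.inl x1) * (1/2 * b (Sum.inr (x1, x))))
        = -∑ x : ι, ∑ x1 : ι, U (Sum.inl x) (Sum.inl x1) * (1/2 * b (Sum.inr (x, x1))) := by
      rw [← Finset.sum_neg_distrib]
      refine Finset.sum_congr rfl fun x _ => ?_
      rw [← Finset.sum_neg_distrib]
      refine Finset.sum_congr rfl fun x1 _ => ?_
      rw [hb x1 x]; ring
    have eT : (∑ μ, ∑ ν, b (Sum.inr (μ,ν)) * U (Sum.inl μ) (Sum.inl ν))
        = 2 * ∑ x : ι, ∑ x1 : ι, U (Sum.inl x) (Sum.inl x1) * (1/2 * b (Sum.inr (x, x1))) := by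
      rw [Finset.mul_sum]
      refine Finset.sum_congr rfl fun μ _ => ?_
      rw [Finset.mul_sum]
      exact Finset.sum_congr rfl fun ν _ => by ring
    rw [e, eT]; ring

  have H2 : iT2 (Dext θ) (b, U) (Matrix.vecCons v (fun i => i.elim0)) =
      (1/2 : ℝ) * (∑ μ, ∑ ν, U (Sum.inl μ) (Sum.inl ν) * v.1 (Sum.inr (μ, ν)))
        - ∑ ν, (∑ σ, U (Sum.inl σ) (Sum.inr (σ, ν))) * v.1 (Sum.inl ν) := by
    have hw : (fun i : Fin 1 => ((Matrix.vecCons v (fun i => i.elim0)) i).1) = fun _ => v.1 := by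
      ext i j; fin_cases i; rfl
    simp only [iT2, Dext_theta θ hθ, hw]
    subst hθ
    simp only [Matrix.cons_val_zero, Matrix.cons_val_one, Matrix.head_cons,
      Matrix.cons_val_two, Matrix.tail_cons,
      Fintype.sum_sum_type, Pi.single_apply, mul_ite, ite_mul, mul_one, mul_zero, zero_mul,
      one_mul, Sum.inl.injEq, Sum.inr.injEq, reduceCtorEq, if_false, sub_zero, zero_sub,
      mul_sub, mul_neg, neg_zero, Finset.sum_sub_distrib, Finset.sum_neg_distrib,
      Finset.sum_ite_eq, Finset.sum_ite_eq', Finset.mem_univ, if_true,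
      Finset.sum_const_zero, add_zero, zero_add, sub_self, Prod.mk.injEq,
      Fintype.sum_prod_type, ite_and, ite_self, Matrix.cons_val_two, Matrix.tail_cons, Matrix.vecHead, sum_ite_push]
    have h3 : ∀ x : ι, (∑ x1 : ι, ∑ x2 : ι,
        if x = x1 then U (Sum.inl x) (Sum.inr (x1, x2)) * (1/2 * v.1 (Sum.inl x2)) else 0)
        = ∑ x2 : ι, U (Sum.inl x) (Sum.inr (x, x2)) * (1/2 * v.1 (Sum.inl x2)) := by
      intro x
      rw [Finset.sum_comm]
      simp
    simp only [h3]
    have e1 : (∑ x : ι, ∑ x1 : ι, U (Sum.inl x) (Sum.inl x1) * (1/2 * v.1 (Sum.inr (x1, x))))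
        = -∑ x : ι, ∑ x1 : ι, U (Sum.inl x) (Sum.inl x1) * (1/2 * v.1 (Sum.inr (x, x1))) := by
      rw [← Finset.sum_neg_distrib]
      refine Finset.sum_congr rfl fun x _ => ?_
      rw [← Finset.sum_neg_distrib]
      refine Finset.sum_congr rfl fun x1 _ => ?_
      rw [hv1 x1 x]; ring
    have e3 : (∑ x : ι, ∑ x1 : ι, U (Sum.inl x) (Sum.inr (x1, x)) * (1/2 * v.1 (Sum.inl x1)))
        = -∑ x : ι, ∑ x1 : ι, U (Sum.inl x) (Sum.inr (x, x1)) * (1/2 * v.1 (Sum.inl x1)) := by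
      rw [← Finset.sum_neg_distrib]
      refine Finset.sum_congr rfl fun x _ => ?_
      rw [← Finset.sum_neg_distrib]
      refine Finset.sum_congr rfl fun x1 _ => ?_
      rw [hUp (Sum.inl x) x1 x]; ring
    have e4 : (∑ x : ι, ∑ x1 : ι, U (Sum.inr (x, x1)) (Sum.inl x) * (1/2 * v.1 (Sum.inl x1)))
        = -∑ x : ι, ∑ x1 : ι, U (Sum.inl x) (Sum.inr (x, x1)) * (1/2 * v.1 (Sum.inl x1)) := by
      rw [← Finset.sum_neg_distrib]
      refine Finset.sum_congr rfl fun x _ => ?_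
      rw [← Finset.sum_neg_distrib]
      refine Finset.sum_congr rfl fun x1 _ => ?_
      rw [hU (Sum.inr (x, x1)) (Sum.inl x)]; ring
    have e5 : (∑ x : ι, ∑ x1 : ι, U (Sum.inr (x, x1)) (Sum.inl x1) * (1/2 * v.1 (Sum.inl x)))
        = ∑ x : ι, ∑ x1 : ι, U (Sum.inl x) (Sum.inr (x, x1)) * (1/2 * v.1 (Sum.inl x1)) := by
      rw [Finset.sum_comm]
      refine Finset.sum_congr rfl fun x1 _ => ?_
      refine Finset.sum_congr rfl fun x _ => ?_
      rw [hU (Sum.inr (x, x1)) (Sum.inl x1), hUp (Sum.inl x1) x x1]; ring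
    have eT : (∑ μ : ι, ∑ ν : ι, U (Sum.inl μ) (Sum.inl ν) * v.1 (Sum.inr (μ, ν)))
        = 2 * ∑ x : ι, ∑ x1 : ι, U (Sum.inl x) (Sum.inl x1) * (1/2 * v.1 (Sum.inr (x, x1))) := by
      rw [Finset.mul_sum]
      refine Finset.sum_congr rfl fun μ _ => ?_
      rw [Finset.mul_sum]
      exact Finset.sum_congr rfl fun ν _ => by ring
    have eA : (∑ ν : ι, (∑ σ : ι, U (Sum.inl σ) (Sum.inr (σ, ν))) * v.1 (Sum.inl ν))
        = 2 * ∑ x : ι, ∑ x1 : ι, U (Sum.inl x) (Sum.inr (x, x1)) * (1/2 * v.1 (Sum.inl x1)) := by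
      have hmul : ∀ ν : ι, (∑ σ : ι, U (Sum.inl σ) (Sum.inr (σ, ν))) * v.1 (Sum.inl ν)
          = ∑ σ : ι, U (Sum.inl σ) (Sum.inr (σ, ν)) * v.1 (Sum.inl ν) :=
        fun ν => Finset.sum_mul _ _ _
      simp only [hmul]
      rw [Finset.sum_comm, Finset.mul_sum]
      refine Finset.sum_congr rfl fun x _ => ?_
      rw [Finset.mul_sum]
      exact Finset.sum_congr rfl fun x1 _ => by ring
    rw [eT, eA, Finset.sum_add_distrib, Finset.sum_sub_distrib, Finset.sum_neg_distrib,
      Finset.sum_sub_distrib, e1, e3, e4, e5]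
    ring
  refine ⟨H1, H2, ?_⟩
  simp only [dT2]
  rw [H2]
  subst hθ
  simp only [Dext, Fin.sum_univ_succ, Fin.sum_univ_zero, add_zero, pow_zero, one_mul,
    Matrix.cons_val_zero, iT2, Matrix.cons_val_one, Matrix.head_cons, Fin.val_zero]
  have key := fderiv_quad_sum4 rfl (fun a c μ ν => (Pi.single a 1 : Vec (ι ⊕ ι × ι)) (Sum.inl μ) * (Pi.single c 1 : Vec (ι ⊕ ι × ι)) (Sum.inl ν)
      - (Pi.single c 1 : Vec (ι ⊕ ι × ι)) (Sum.inl μ) * (Pi.single a 1 : Vec (ι ⊕ ι × ι)) (Sum.inl ν)) Sum.inr (b, U) v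
  simp only [] at key
  rw [key]
  simp only [Fintype.sum_sum_type, Pi.single_apply, mul_ite, ite_mul, mul_one, mul_zero, zero_mul,
    one_mul, Sum.inl.injEq, reduceCtorEq, if_false, sub_zero, zero_sub,
    Finset.sum_ite_eq, Finset.sum_ite_eq', Finset.mem_univ, if_true,
    Finset.sum_const_zero, mul_neg, add_zero, zero_add, sub_self, mul_sub,
    Finset.sum_sub_distrib, Finset.sum_neg_distrib, neg_zero]
  have e : ∀ x x1 : ι,
      (v.2 (Sum.inl x) (Sum.inl x1) * (1/2 * b (Sum.inr (x, x1))) -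
          v.2 (Sum.inl x) (Sum.inl x1) * (1/2 * b (Sum.inr (x1, x))) +
        (U (Sum.inl x) (Sum.inl x1) * (1/2 * v.1 (Sum.inr (x, x1))) -
          U (Sum.inl x) (Sum.inl x1) * (1/2 * v.1 (Sum.inr (x1, x)))))
      = b (Sum.inr (x, x1)) * v.2 (Sum.inl x) (Sum.inl x1)
        + U (Sum.inl x) (Sum.inl x1) * v.1 (Sum.inr (x, x1)) := by
    intro x x1
    rw [hb x1 x, hv1 x1 x]; ring
  simp only [e, Finset.sum_add_distrib]
  ring

end
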